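/- Let R≥1 and D≥1 be integers, and let G be a finite tree with diameter at most 2R whose every vertex has degree at most D+1. Then λ₂(G) ≥ 1/(Σ_{i=0}^{R−1} D^i); when D≥2 this bound equals (D−1)/(D^R−1). -/

import Mathlib

open Finset

attribute [local instance] Classical.propDecidable

namespace Steklov

variable {V : Type} [Fintype V] [DecidableEq V]

/-- The boundary of a graph: the set of vertices of degree one. -/
noncomputable def bdry (G : SimpleGraph V) : Finset V :=
  Finset.univ.filter (fun v => G.degree v = 1)

/-- The graph Laplacian `Δf(x) = Σ_{y∼x} (f x - f y)`. -/
noncomputable def lap (G : SimpleGraph V) (f : V → ℝ) (x : V) : ℝ :=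
  ∑ y ∈ G.neighborFinset x, (f x - f y)

/-- `f` is a Steklov eigenfunction of `G` with eigenvalue `lam`:
`f ≠ 0`, `Δf = 0` on the interior and `∂f/∂n = lam • f` on the boundary. -/
noncomputable def IsEigenpair (G : SimpleGraph V) (lam : ℝ) (f : V → ℝ) : Prop :=
  f ≠ 0 ∧ (∀ x, x ∉ bdry G → lap G f x = 0) ∧ ∀ x ∈ bdry G, lap G f x = lam * f x

/-- The first nonzero Steklov eigenvalue of `G`. -/
noncomputable def lambda2 (G : SimpleGraph V) : ℝ :=
  sInf {lam : ℝ | 0 < lam ∧ ∃ f : V → ℝ, IsEigenpair G lam f}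

/-- `f` is a `lam`-flow to `x` on `G`. -/
noncomputable def IsFlow (G : SimpleGraph V) (lam : ℝ) (x : V) (f : V → ℝ) : Prop :=
  f ≠ 0 ∧ (∀ w, w ∉ bdry G → w ≠ x → lap G f w = 0) ∧
    ∀ w ∈ bdry G, w ≠ x → lap G f w = lam * f w

/-- The Rayleigh quotient of `f` (sum over undirected edges in the numerator). -/
noncomputable def rayleigh (G : SimpleGraph V) (f : V → ℝ) : ℝ :=
  ((∑ x, ∑ y ∈ G.neighborFinset x, (f x - f y) ^ 2) / 2) / ∑ x ∈ bdry G, f x ^ 2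

/-- `Σ(G,x)`: the set of `lam ≥ 0` admitting a `lam`-flow `f` to `x` with `f x = 0`
which increases along edges pointing away from `x`. -/
def SigmaSet (G : SimpleGraph V) (x : V) : Set ℝ :=
  {lam | 0 ≤ lam ∧ ∃ f : V → ℝ, IsFlow G lam x f ∧ f x = 0 ∧
    ∀ y z : V, G.Adj y z → G.dist x z < G.dist x y → f z < f y}

/-- `Σ̂(G,x)`: the set of `lam ≥ 0` admitting a `lam`-flow `f` to `x` with `f x = 0`. -/
def SigmaHatSet (G : SimpleGraph V) (x : V) : Set ℝ :=
  {lam | 0 ≤ lam ∧ ∃ f : V → ℝ, IsFlow G lam x f ∧ f x = 0}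

/-- `σ(G,x) = inf Σ(G,x)`. -/
noncomputable def sigma (G : SimpleGraph V) (x : V) : ℝ := sInf (SigmaSet G x)

/-- `σ̂(G,x) = inf Σ̂(G,x)`. -/
noncomputable def sigmaHat (G : SimpleGraph V) (x : V) : ℝ := sInf (SigmaHatSet G x)

/-- The vertex set of the branch from `(u,v)`: the connected component of `u`
after deleting the edge between `u` and `v`. -/
def branchSet (G : SimpleGraph V) (u v : V) : Set V :=
  {w | (G.deleteEdges {s(u, v)}).Reachable u w}

/-- The vertex set of the subtree `H(u,v)` spanned by the branch from `(u,v)` together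
with `v`. -/
def branchClosed (G : SimpleGraph V) (u v : V) : Set V :=
  insert v (branchSet G u v)

/-- `σ(H(u,v), v)`, computed intrinsically in the subtree `H(u,v)`. -/
noncomputable def sigmaB (G : SimpleGraph V) (u v : V) : ℝ :=
  sigma (G.induce (branchClosed G u v)) ⟨v, Set.mem_insert _ _⟩

/-- The double `(G)²_x` of `G` at `x`: two disjoint copies of `G` with the two
copies of `x` identified. -/
def doubleAt (G : SimpleGraph V) (x : V) : SimpleGraph (V ⊕ {v : V // v ≠ x}) where
  Adj a b :=
    match a, b with
    | Sum.inl u, Sum.inl w => G.Adj u w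
    | Sum.inr u, Sum.inr w => G.Adj u.1 w.1
    | Sum.inl u, Sum.inr w => u = x ∧ G.Adj x w.1
    | Sum.inr u, Sum.inl w => w = x ∧ G.Adj x u.1
  symm := by
    constructor
    rintro (u | u) (w | w) h
    · exact h.symm
    · exact h
    · exact h
    · exact h.symm
  loopless := by
    constructor
    rintro (u | u) h
    · exact G.loopless.irrefl u h
    · exact G.loopless.irrefl u.1 h

set_option linter.unusedSectionVars false
set_option linter.unusedVariables false
set_option maxHeartbeats 1000000
section Aux
open SimpleGraph

lemma sum_nbhd (G : SimpleGraph V) (F : V → V → ℝ) :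
    ∑ x, ∑ y ∈ G.neighborFinset x, F x y
      = ∑ p ∈ (univ ×ˢ univ).filter (fun p : V × V => G.Adj p.1 p.2), F p.1 p.2 := by
  rw [Finset.sum_filter, Finset.sum_product]
  refine Finset.sum_congr rfl fun x _ => ?_
  rw [neighborFinset_eq_filter, Finset.sum_filter]

lemma sum_nbhd_swap (G : SimpleGraph V) (F : V → V → ℝ) :
    ∑ x, ∑ y ∈ G.neighborFinset x, F x y = ∑ x, ∑ y ∈ G.neighborFinset x, F y x := by
  rw [sum_nbhd, sum_nbhd]
  refine Finset.sum_nbij' (fun p => Prod.swap p) (fun p => Prod.swap p) ?_ ?_ ?_ ?_ ?_ <;>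
    simp [SimpleGraph.adj_comm]

lemma green (G : SimpleGraph V) (f g : V → ℝ) :
    2 * ∑ x, g x * lap G f x
      = ∑ x, ∑ y ∈ G.neighborFinset x, (g x - g y) * (f x - f y) := by
  have h1 : ∑ x, g x * lap G f x = ∑ x, ∑ y ∈ G.neighborFinset x, g x * (f x - f y) := by
    simp only [lap, Finset.mul_sum]
  have h2 := sum_nbhd_swap G (fun x y => g x * (f x - f y))
  have h3 : ∀ x : V, ∑ y ∈ G.neighborFinset x, (g x * (f x - f y) + g y * (f y - f x))
      = ∑ y ∈ G.neighborFinset x, (g x - g y) * (f x - f y) :=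
    fun x => Finset.sum_congr rfl fun y _ => by ring
  calc 2 * ∑ x, g x * lap G f x
      = (∑ x, ∑ y ∈ G.neighborFinset x, g x * (f x - f y))
        + ∑ x, ∑ y ∈ G.neighborFinset x, g y * (f y - f x) := by rw [h1, ← h2]; ring
    _ = ∑ x, (∑ y ∈ G.neighborFinset x, (g x * (f x - f y) + g y * (f y - f x))) := by
        rw [← Finset.sum_add_distrib]
        exact Finset.sum_congr rfl fun x _ => (Finset.sum_add_distrib).symm
    _ = _ := Finset.sum_congr rfl fun x _ => h3 x

lemma green_self (G : SimpleGraph V) (f : V → ℝ) :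
    2 * ∑ x, f x * lap G f x = ∑ x, ∑ y ∈ G.neighborFinset x, (f x - f y) ^ 2 := by
  rw [green G f f]
  exact Finset.sum_congr rfl fun x _ => Finset.sum_congr rfl fun y _ => (sq _).symm

lemma sum_lap (G : SimpleGraph V) (f : V → ℝ) : ∑ x, lap G f x = 0 := by
  have := green G f (fun _ => 1)
  simp only [sub_self, zero_mul, Finset.sum_const_zero, one_mul] at this
  linarith

lemma energy_nonneg (G : SimpleGraph V) (f : V → ℝ) :
    0 ≤ ∑ x, ∑ y ∈ G.neighborFinset x, (f x - f y) ^ 2 :=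
  Finset.sum_nonneg fun x _ => Finset.sum_nonneg fun y _ => sq_nonneg _

lemma adj_eq_of_energy_eq_zero (G : SimpleGraph V) (f : V → ℝ)
    (h : ∑ x, ∑ y ∈ G.neighborFinset x, (f x - f y) ^ 2 = 0) :
    ∀ x y, G.Adj x y → f x = f y := by
  intro x y hxy
  have hx := (Finset.sum_eq_zero_iff_of_nonneg
    (fun x _ => Finset.sum_nonneg fun y _ => sq_nonneg _)).mp h x (Finset.mem_univ x)
  have hy := (Finset.sum_eq_zero_iff_of_nonneg (fun y _ => sq_nonneg _)).mp hx y
    ((SimpleGraph.mem_neighborFinset G x y).mpr hxy)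
  have := sq_eq_zero_iff.mp hy
  linarith

lemma const_of_adj_eq (G : SimpleGraph V) (hc : G.Connected) (f : V → ℝ)
    (h : ∀ x y, G.Adj x y → f x = f y) (a b : V) : f a = f b := by
  obtain ⟨p⟩ := hc a b
  induction p with
  | nil => rfl
  | cons hadj q ih => exact (h _ _ hadj).trans ih


section Walks

variable {G : SimpleGraph V}

lemma dist_getVert_le (hc : G.Connected) {a b : V} (p : G.Walk a b) :
    ∀ i, G.dist a (p.getVert i) ≤ i := by
  induction p with
  | nil => intro i; simp [SimpleGraph.Walk.getVert, SimpleGraph.dist_self]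
  | @cons a c b hadj q ih =>
    intro i
    cases i with
    | zero => simp [SimpleGraph.Walk.getVert, SimpleGraph.dist_self]
    | succ n =>
      have h1 : G.dist a c ≤ 1 := by
        simpa using SimpleGraph.dist_le (SimpleGraph.Walk.cons hadj SimpleGraph.Walk.nil)
      have h2 := hc.dist_triangle (u := a) (v := c) (w := q.getVert n)
      have h3 := ih n
      have : (SimpleGraph.Walk.cons hadj q).getVert (n+1) = q.getVert n := rfl
      rw [this]
      omega

lemma dist_getVert_le' {a b : V} (p : G.Walk a b) :
    ∀ i, G.dist (p.getVert i) b ≤ p.length - i := by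
  induction p with
  | nil => intro i; simp [SimpleGraph.Walk.getVert]
  | @cons a c b hadj q ih =>
    intro i
    cases i with
    | zero =>
      simpa using SimpleGraph.dist_le (SimpleGraph.Walk.cons hadj q)
    | succ n =>
      have h3 := ih n
      have : (SimpleGraph.Walk.cons hadj q).getVert (n+1) = q.getVert n := rfl
      rw [this]
      simpa using h3

lemma getVert_dist (hc : G.Connected) {a b : V} {p : G.Walk a b}
    (hp : p.length = G.dist a b) {i : ℕ} (hi : i ≤ p.length) :
    G.dist a (p.getVert i) = i ∧ G.dist (p.getVert i) b = p.length - i := by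
  have h1 := dist_getVert_le hc p i
  have h2 := dist_getVert_le' p i
  have h3 := hc.dist_triangle (u := a) (v := p.getVert i) (w := b)
  omega

lemma exists_geodesic_path (hc : G.Connected) (u v : V) :
    ∃ p : G.Walk u v, p.IsPath ∧ p.length = G.dist u v := by
  obtain ⟨q, hq⟩ := (hc u v).exists_walk_length_eq_dist
  exact ⟨q.bypass, q.bypass_isPath,
    le_antisymm (hq ▸ q.length_bypass_le) (SimpleGraph.dist_le _)⟩

lemma first_step (hc : G.Connected) {v z : V} (h : G.dist v z ≠ 0) :
    ∃ w, G.Adj v w ∧ G.dist w z + 1 = G.dist v z := by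
  obtain ⟨p, hp, hl⟩ := exists_geodesic_path hc v z
  cases p with
  | nil => exact absurd (by simp : G.dist v v = 0) h
  | @cons v c z hadj q =>
    refine ⟨c, hadj, ?_⟩
    have h1 : G.dist c z ≤ q.length := SimpleGraph.dist_le q
    have h2 := hc.dist_triangle (u := v) (v := c) (w := z)
    have h3 : G.dist v c ≤ 1 := by
      simpa using SimpleGraph.dist_le (SimpleGraph.Walk.cons hadj SimpleGraph.Walk.nil)
    have h4 : (SimpleGraph.Walk.cons hadj q).length = q.length + 1 := rfl
    omega

lemma support_dist_lt (hc : G.Connected) {z a : V} {p : G.Walk z a}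
    (hp : p.length = G.dist z a) {y : V} (hy : y ∈ p.support) (hne : y ≠ a) :
    G.dist z y < G.dist z a := by
  obtain ⟨i, hgi, hile⟩ := SimpleGraph.Walk.mem_support_iff_exists_getVert.mp hy
  have h := (getVert_dist hc hp hile).1
  have hix : i ≠ p.length := by
    intro h'
    exact hne (by rw [← hgi, h', SimpleGraph.Walk.getVert_length])
  rw [hgi] at h
  omega

lemma isPath_concat {z a b : V} {p : G.Walk z a} (hp : p.IsPath) (h : G.Adj a b)
    (hb : b ∉ p.support) : (p.concat h).IsPath := by
  rw [SimpleGraph.Walk.isPath_def, SimpleGraph.Walk.support_concat,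
    List.nodup_append]
  refine ⟨hp.support_nodup, List.nodup_singleton _, ?_⟩
  intro x hx y hx' hxy
  rw [List.mem_singleton] at hx'
  subst hx'
  subst hxy
  exact hb hx

lemma adj_dist_step (hT : G.IsTree) (z : V) {a b : V} (hab : G.Adj a b) :
    G.dist z b = G.dist z a + 1 ∨ G.dist z a = G.dist z b + 1 := by
  have hc := hT.isConnected
  have hab1 : G.dist a b ≤ 1 := by
    simpa using SimpleGraph.dist_le (SimpleGraph.Walk.cons hab SimpleGraph.Walk.nil)
  have t1 := hc.dist_triangle (u := z) (v := a) (w := b)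
  have t2 := hc.dist_triangle (u := z) (v := b) (w := a)
  have hba1 : G.dist b a ≤ 1 := by
    simpa using SimpleGraph.dist_le (SimpleGraph.Walk.cons hab.symm SimpleGraph.Walk.nil)
  have hne : G.dist z a ≠ G.dist z b := by
    intro he
    obtain ⟨P, hP, hPl⟩ := exists_geodesic_path hc z a
    obtain ⟨Q, hQ, hQl⟩ := exists_geodesic_path hc z b
    have hbP : b ∉ P.support := by
      intro hbin
      have := support_dist_lt hc hPl hbin hab.ne'
      omega
    have hPath : (P.concat hab).IsPath := isPath_concat hP hab hbP
    have hEq : P.concat hab = Q := (hT.existsUnique_path z b).unique hPath hQ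
    have hlen : (P.concat hab).length = Q.length := by rw [hEq]
    rw [SimpleGraph.Walk.length_concat] at hlen
    omega
  omega

lemma no_peak (hT : G.IsTree) (z : V) {a b c : V} (hab : G.Adj a b) (hbc : G.Adj b c)
    (hac : a ≠ c) (h1 : G.dist z b = G.dist z a + 1) : G.dist z c = G.dist z b + 1 := by
  have hc' := hT.isConnected
  rcases adj_dist_step hT z hbc with h | h
  · exact h
  · exfalso
    -- dist z c = dist z a, dist z b = that + 1
    obtain ⟨P, hP, hPl⟩ := exists_geodesic_path hc' z a
    obtain ⟨Q, hQ, hQl⟩ := exists_geodesic_path hc' z c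
    have hbP : b ∉ P.support := by
      intro hbin
      rcases eq_or_ne b a with rfl | hba
      · exact hab.ne rfl
      · have := support_dist_lt hc' hPl hbin hba
        omega
    have hbQ : b ∉ Q.support := by
      intro hbin
      rcases eq_or_ne b c with rfl | hbc'
      · exact hbc.ne rfl
      · have := support_dist_lt hc' hQl hbin hbc'
        omega
    have hP2 : (P.concat hab).IsPath := isPath_concat hP hab hbP
    have hQ2 : (Q.concat hbc.symm).IsPath := isPath_concat hQ hbc.symm hbQ
    have hEq : P.concat hab = Q.concat hbc.symm := (hT.existsUnique_path z b).unique hP2 hQ2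
    have haSupp : a ∈ (Q.concat hbc.symm).support := by
      rw [← hEq, SimpleGraph.Walk.support_concat, List.mem_append]
      exact Or.inl (SimpleGraph.Walk.end_mem_support P)
    rw [SimpleGraph.Walk.support_concat, List.mem_append,
      List.mem_singleton] at haSupp
    rcases haSupp with haQ | rfl
    · rcases eq_or_ne a c with rfl | hac'
      · exact hac rfl
      · have := support_dist_lt hc' hQl haQ hac'
        omega
    · omega

end Walks


section Center

variable {G : SimpleGraph V}

lemma exists_center (hT : G.IsTree) (R : ℕ) (hcard : 2 ≤ Fintype.card V)
    (hdiam : G.diam ≤ 2 * R) : ∃ x0 : V, ∀ z : V, G.dist x0 z ≤ R := by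
  have hc := hT.isConnected
  have hne : Nonempty V := Fintype.card_pos_iff.mp (by omega)
  obtain ⟨u, w, huw⟩ := SimpleGraph.exists_dist_eq_diam (G := G)
  have hent : G.ediam ≠ ⊤ := by
    obtain ⟨u', w', h'⟩ := SimpleGraph.exists_edist_eq_ediam_of_finite (G := G)
    rw [← h']
    exact SimpleGraph.edist_ne_top_iff_reachable.mpr (hc u' w')
  have hdall : ∀ a b : V, G.dist a b ≤ G.dist u w := by
    intro a b; rw [huw]; exact SimpleGraph.dist_le_diam hent
  obtain ⟨p, hp, hpl⟩ := exists_geodesic_path hc u w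
  set d := G.dist u w with hd
  set k := min d R with hk
  have hkd : k ≤ d := min_le_left _ _
  have hkR : k ≤ R := min_le_right _ _
  have hdR : d ≤ 2 * R := by rw [huw]; exact hdiam
  refine ⟨p.getVert k, fun z => ?_⟩
  set m : ℕ → ℕ := fun i => G.dist z (p.getVert i) with hm
  have hstep : ∀ i, i < d → m (i+1) = m i + 1 ∨ m i = m (i+1) + 1 := by
    intro i hi
    exact adj_dist_step hT z (p.adj_getVert_succ (by omega))
  have hgv : ∀ {i j : ℕ}, i ≤ d → j ≤ d → p.getVert i = p.getVert j → i = j := by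
    intro i j hi hj hij
    have h1 := (getVert_dist hc hpl (by omega : i ≤ p.length)).1
    have h2 := (getVert_dist hc hpl (by omega : j ≤ p.length)).1
    rw [hij] at h1; omega
  have hm0 : m 0 ≤ d := by
    have : p.getVert 0 = u := p.getVert_zero
    rw [hm]; simp only [this]
    rw [SimpleGraph.dist_comm]; exact hdall u z
  have hmd : m d ≤ d := by
    have : p.getVert d = w := by rw [← hpl] at *; exact p.getVert_length
    rw [hm]; simp only [this]
    rw [SimpleGraph.dist_comm]; exact hdall w z
  have goal : m k ≤ R := by
    by_cases hasc : ∃ j, j < k ∧ m (j+1) = m j + 1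
    · obtain ⟨j, hjk, hjasc⟩ := hasc
      have mono : ∀ l, j ≤ l → l < d → m (l+1) = m l + 1 := by
        intro l hjl
        induction l, hjl using Nat.le_induction with
        | base => intro _; exact hjasc
        | succ n hn ih =>
          intro hnd
          have h1 : m (n+1) = m n + 1 := ih (by omega)
          have hne2 : p.getVert n ≠ p.getVert (n+2) := by
            intro hx; have := hgv (by omega : n ≤ d) (by omega : n + 2 ≤ d) hx; omega
          exact no_peak hT z (p.adj_getVert_succ (by omega))
            (p.adj_getVert_succ (by omega)) hne2 h1
      have incr : ∀ l, k ≤ l → l ≤ d → m l = m k + (l - k) := by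
        intro l hkl
        induction l, hkl using Nat.le_induction with
        | base => intro _; omega
        | succ n hn ih =>
          intro hnd
          have h1 := ih (by omega)
          have h2 := mono n (by omega) (by omega)
          omega
      have := incr d hkd le_rfl
      omega
    · push_neg at hasc
      have desc : ∀ l, l ≤ k → m l + l = m 0 := by
        intro l
        induction l with
        | zero => intro _; omega
        | succ n ih =>
          intro hnk
          have h1 := ih (by omega)
          rcases hstep n (by omega) with h | h
          · exact absurd h (hasc n (by omega))
          · omega
      have := desc k le_rfl
      omega
  rw [SimpleGraph.dist_comm]
  exact goal

lemma branch_count (hT : G.IsTree) (D : ℕ) (hD : 1 ≤ D) (hdeg : ∀ v : V, G.degree v ≤ D + 1) :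
    ∀ (h : ℕ) (u v : V), G.Adj u v →
      (univ.filter (fun z => G.degree z = 1 ∧ G.dist v z ≤ h ∧ G.dist u z = G.dist v z + 1)).card
        ≤ D ^ h := by
  have hc := hT.isConnected
  intro h
  induction h with
  | zero =>
    intro u v huv
    have hsub : (univ.filter (fun z => G.degree z = 1 ∧ G.dist v z ≤ 0 ∧
        G.dist u z = G.dist v z + 1)) ⊆ {v} := by
      intro z hz
      simp only [Finset.mem_filter] at hz
      have h0 : G.dist v z = 0 := by omega
      have : v = z := (hc v z).dist_eq_zero_iff.mp h0
      simp [this]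
    simpa using Finset.card_le_card hsub
  | succ h ih =>
    intro u v huv
    by_cases hdv : G.degree v = 1
    · have hsub : (univ.filter (fun z => G.degree z = 1 ∧ G.dist v z ≤ h + 1 ∧
          G.dist u z = G.dist v z + 1)) ⊆ {v} := by
        intro z hz
        simp only [Finset.mem_filter] at hz
        rw [Finset.mem_singleton]
        by_contra hne
        have hz0 : G.dist v z ≠ 0 := fun h0 => hne ((hc v z).dist_eq_zero_iff.mp h0).symm
        obtain ⟨w', hvw, hwz⟩ := first_step hc hz0
        have hu : u ∈ G.neighborFinset v := (SimpleGraph.mem_neighborFinset G v u).mpr huv.symm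
        have hw : w' ∈ G.neighborFinset v := (SimpleGraph.mem_neighborFinset G v w').mpr hvw
        have hcard1 : (G.neighborFinset v).card = 1 := hdv
        obtain ⟨c, hcc⟩ := Finset.card_eq_one.mp hcard1
        rw [hcc, Finset.mem_singleton] at hu hw
        rw [hw, ← hu] at hwz
        omega
      calc _ ≤ ({v} : Finset V).card := Finset.card_le_card hsub
        _ ≤ D ^ (h+1) := by simpa using Nat.one_le_pow _ _ (by omega)
    · have hsub : (univ.filter (fun z => G.degree z = 1 ∧ G.dist v z ≤ h + 1 ∧
          G.dist u z = G.dist v z + 1)) ⊆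
          ((G.neighborFinset v).erase u).biUnion (fun w' =>
            univ.filter (fun z => G.degree z = 1 ∧ G.dist w' z ≤ h ∧
              G.dist v z = G.dist w' z + 1)) := by
        intro z hz
        simp only [Finset.mem_filter] at hz
        have hz0 : G.dist v z ≠ 0 := by
          intro h0
          have : v = z := (hc v z).dist_eq_zero_iff.mp h0
          rw [← this] at hz
          exact hdv hz.2.1
        obtain ⟨w', hvw, hwz⟩ := first_step hc hz0
        refine Finset.mem_biUnion.mpr ⟨w', ?_, ?_⟩
        · refine Finset.mem_erase.mpr ⟨?_, (SimpleGraph.mem_neighborFinset G v w').mpr hvw⟩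
          intro hwu
          rw [hwu] at hwz
          omega
        · simp only [Finset.mem_filter]
          exact ⟨Finset.mem_univ z, hz.2.1, by omega, by omega⟩
      calc _ ≤ _ := Finset.card_le_card hsub
        _ ≤ ∑ w' ∈ (G.neighborFinset v).erase u, (univ.filter (fun z => G.degree z = 1 ∧
              G.dist w' z ≤ h ∧ G.dist v z = G.dist w' z + 1)).card := Finset.card_biUnion_le
        _ ≤ ∑ w' ∈ (G.neighborFinset v).erase u, D ^ h := by
            refine Finset.sum_le_sum fun w' hw' => ?_
            have hvw : G.Adj v w' := (SimpleGraph.mem_neighborFinset G v w').mp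
              (Finset.mem_of_mem_erase hw')
            exact ih v w' hvw
        _ = ((G.neighborFinset v).erase u).card * D ^ h := by
            rw [Finset.sum_const, smul_eq_mul]
        _ ≤ D * D ^ h := by
            have h1 : u ∈ G.neighborFinset v := (SimpleGraph.mem_neighborFinset G v u).mpr huv.symm
            have h2 : ((G.neighborFinset v).erase u).card = G.degree v - 1 := by
              rw [Finset.card_erase_of_mem h1]; rfl
            have h3 := hdeg v
            have h4 : G.degree v ≠ 1 := hdv
            have h5 : 0 < G.degree v := by
              rw [← SimpleGraph.card_neighborFinset_eq_degree]
              exact Finset.card_pos.mpr ⟨u, h1⟩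
            apply Nat.mul_le_mul_right
            omega
        _ = D ^ (h+1) := by ring

end Center


section Leaves

variable {G : SimpleGraph V}

lemma degree_pos (hc : G.Connected) (hcard : 2 ≤ Fintype.card V) (v : V) :
    0 < G.degree v := by
  obtain ⟨w, hw⟩ := Fintype.exists_ne_of_one_lt_card (by omega) v
  have hz : G.dist v w ≠ 0 := fun h0 => hw (((hc v w).dist_eq_zero_iff.mp h0).symm)
  obtain ⟨y, hy, _⟩ := first_step hc hz
  exact (G.degree_pos_iff_exists_adj v).mpr ⟨y, hy⟩

lemma two_leaves (hT : G.IsTree) (hcard : 2 ≤ Fintype.card V) :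
    ∃ a b : V, a ∈ bdry G ∧ b ∈ bdry G ∧ a ≠ b := by
  have hc := hT.isConnected
  have hsum : ∑ v : V, G.degree v = 2 * G.edgeFinset.card :=
    SimpleGraph.sum_degrees_eq_twice_card_edges G
  have hE : G.edgeFinset.card + 1 = Fintype.card V := hT.card_edgeFinset
  set L := univ.filter (fun v : V => G.degree v = 1) with hL
  have hbd : bdry G = L := rfl
  by_contra hcon
  push_neg at hcon
  have hL1 : L.card ≤ 1 := by
    by_contra hL2
    push_neg at hL2
    obtain ⟨a, ha, b, hb, hab⟩ := Finset.one_lt_card.mp hL2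
    exact hab (hcon a b (by rw [hbd]; exact ha) (by rw [hbd]; exact hb))
  have hlow : ∀ v ∈ (univ : Finset V) \ L, 2 ≤ G.degree v := by
    intro v hv
    rw [Finset.mem_sdiff, hL, Finset.mem_filter] at hv
    have h1 := degree_pos hc hcard v
    have h2 : ¬ G.degree v = 1 := fun h => hv.2 ⟨Finset.mem_univ v, h⟩
    omega
  have hsplit : ∑ v : V, G.degree v = ∑ v ∈ L, G.degree v + ∑ v ∈ univ \ L, G.degree v := by
    rw [← Finset.sum_union (Finset.disjoint_sdiff)]
    congr 1
    rw [Finset.union_sdiff_of_subset (Finset.subset_univ L)]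
  have h1 : ∑ v ∈ L, G.degree v ≥ L.card := by
    calc L.card = ∑ _v ∈ L, 1 := by simp
    _ ≤ _ := Finset.sum_le_sum (fun v hv => by
        rw [hL, Finset.mem_filter] at hv; omega)
  have h2 : ∑ v ∈ univ \ L, G.degree v ≥ 2 * (univ \ L).card := by
    calc 2 * (univ \ L).card = ∑ _v ∈ univ \ L, 2 := by rw [Finset.sum_const]; ring
    _ ≤ _ := Finset.sum_le_sum hlow
  have hcards : (univ \ L).card = Fintype.card V - L.card := by
    rw [Finset.card_sdiff_of_subset (Finset.subset_univ L), Finset.card_univ]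
  have hLle : L.card ≤ Fintype.card V := by
    calc L.card ≤ (univ : Finset V).card := Finset.card_le_card (Finset.subset_univ L)
    _ = _ := Finset.card_univ
  omega

end Leaves

lemma weighted_cs (n : ℕ) (a w : ℕ → ℝ) (hw : ∀ i, 0 < w i) :
    (∑ i ∈ range n, a i) ^ 2 ≤ (∑ i ∈ range n, w i) * ∑ i ∈ range n, a i ^ 2 / w i := by
  have key := Finset.sum_mul_sq_le_sq_mul_sq (range n) (fun i => Real.sqrt (w i))
    (fun i => a i / Real.sqrt (w i))
  have h1 : ∀ i ∈ range n, Real.sqrt (w i) * (a i / Real.sqrt (w i)) = a i := by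
    intro i _
    have : Real.sqrt (w i) ≠ 0 := ne_of_gt (Real.sqrt_pos.mpr (hw i))
    field_simp
  rw [Finset.sum_congr rfl h1] at key
  refine le_trans key (le_of_eq ?_)
  congr 1
  · exact Finset.sum_congr rfl fun i _ => Real.sq_sqrt (hw i).le
  · refine Finset.sum_congr rfl fun i _ => ?_
    rw [div_pow, Real.sq_sqrt (hw i).le]



lemma eigen_lower (R D : ℕ) (hR : 1 ≤ R) (hD : 1 ≤ D) (G : SimpleGraph V)
    (hT : G.IsTree) (hcard : 2 ≤ Fintype.card V) (hdiam : G.diam ≤ 2 * R)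
    (hdeg : ∀ v : V, G.degree v ≤ D + 1) {lam : ℝ} {f : V → ℝ}
    (hlam : 0 < lam) (he : IsEigenpair G lam f) :
    1 / (∑ i ∈ Finset.range R, (D : ℝ) ^ i) ≤ lam := by
  have hc := hT.isConnected
  obtain ⟨f_ne, hint, hbd⟩ := he
  have hDR : (0:ℝ) < (D:ℝ) := by exact_mod_cast hD
  set S : ℝ := ∑ i ∈ Finset.range R, (D : ℝ) ^ i with hS
  have hSpos : 0 < S := by
    apply Finset.sum_pos (fun i _ => pow_pos hDR i)
    exact Finset.nonempty_range_iff.mpr (by omega)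
  set Q : ℝ := ∑ z ∈ bdry G, f z ^ 2 with hQ
  have hsplit : ∀ (g : V → ℝ), ∑ x, g x = ∑ x ∈ bdry G, g x + ∑ x ∈ univ \ bdry G, g x := by
    intro g
    rw [← Finset.sum_union Finset.disjoint_sdiff,
      Finset.union_sdiff_of_subset (Finset.subset_univ _)]
  have hE2 : ∑ x, ∑ y ∈ G.neighborFinset x, (f x - f y)^2 = 2 * (lam * Q) := by
    rw [← green_self]
    congr 1
    rw [hsplit (fun x => f x * lap G f x)]
    have t1 : ∑ x ∈ bdry G, f x * lap G f x = lam * Q := by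
      rw [hQ, Finset.mul_sum]
      refine Finset.sum_congr rfl fun x hx => ?_
      rw [hbd x hx]; ring
    have t2 : ∑ x ∈ univ \ bdry G, f x * lap G f x = 0 := by
      refine Finset.sum_eq_zero fun x hx => ?_
      rw [hint x (Finset.mem_sdiff.mp hx).2, mul_zero]
    rw [t1, t2, add_zero]
  have hsum0 : ∑ z ∈ bdry G, f z = 0 := by
    have h0 := sum_lap G f
    rw [hsplit (lap G f)] at h0
    have t2 : ∑ x ∈ univ \ bdry G, lap G f x = 0 :=
      Finset.sum_eq_zero fun x hx => hint x (Finset.mem_sdiff.mp hx).2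
    have t1 : ∑ x ∈ bdry G, lap G f x = lam * ∑ z ∈ bdry G, f z := by
      rw [Finset.mul_sum]
      exact Finset.sum_congr rfl fun x hx => hbd x hx
    rw [t1, t2, add_zero] at h0
    exact (mul_eq_zero.mp h0).resolve_left (ne_of_gt hlam)
  obtain ⟨b1, b2, hb1, hb2, hb12⟩ := two_leaves hT hcard
  have hQpos : 0 < Q := by
    rcases lt_or_eq_of_le (Finset.sum_nonneg (fun z _ => sq_nonneg (f z)) : 0 ≤ Q) with h | h
    · exact h
    exfalso
    have hf0 : ∀ z ∈ bdry G, f z = 0 := by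
      intro z hz
      have h2 := (Finset.sum_eq_zero_iff_of_nonneg (fun z _ => sq_nonneg (f z))).mp h.symm z hz
      exact pow_eq_zero_iff (two_ne_zero) |>.mp h2
    have hQ0 : Q = 0 := h.symm
    have hE0 : ∑ x, ∑ y ∈ G.neighborFinset x, (f x - f y)^2 = 0 := by
      rw [hE2, hQ0]; ring
    have hconst := const_of_adj_eq G hc f (adj_eq_of_energy_eq_zero G f hE0)
    apply f_ne
    funext x
    show f x = 0
    rw [hconst x b1]
    exact hf0 b1 hb1
  obtain ⟨x0, hx0⟩ := exists_center hT R hcard hdiam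
  have hpaths : ∀ z : V, ∃ p : G.Walk x0 z, p.length = G.dist x0 z :=
    fun z => (hc x0 z).exists_walk_length_eq_dist
  choose pz hpz using hpaths
  have hlen_le : ∀ z : V, (pz z).length ≤ R := fun z => by rw [hpz z]; exact hx0 z
  set P : Finset (V × V) := (univ ×ˢ univ).filter
    (fun q : V × V => G.Adj q.1 q.2 ∧ G.dist x0 q.2 = G.dist x0 q.1 + 1) with hP
  set img : V → Finset (V × V) := fun z => (range (pz z).length).image
    (fun i => ((pz z).getVert i, (pz z).getVert (i+1))) with himg
  set wt : V × V → ℝ := fun q => (D : ℝ) ^ (R - 1 - G.dist x0 q.1) with hwt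
  have hwtpos : ∀ q, 0 < wt q := fun q => pow_pos hDR _
  have hgv1 : ∀ (z : V) (i : ℕ), i ≤ (pz z).length → G.dist x0 ((pz z).getVert i) = i :=
    fun z i hi => (getVert_dist hc (hpz z) hi).1
  have hgv2 : ∀ (z : V) (i : ℕ), i ≤ (pz z).length →
      G.dist ((pz z).getVert i) z = (pz z).length - i :=
    fun z i hi => (getVert_dist hc (hpz z) hi).2
  have himgP : ∀ z : V, img z ⊆ P := by
    intro z q hq
    rw [himg, Finset.mem_image] at hq
    obtain ⟨i, hi, hq⟩ := hq
    rw [Finset.mem_range] at hi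
    subst hq
    rw [hP, Finset.mem_filter]
    refine ⟨Finset.mem_product.mpr ⟨Finset.mem_univ _, Finset.mem_univ _⟩,
      (pz z).adj_getVert_succ hi, ?_⟩
    rw [hgv1 z i (by omega), hgv1 z (i+1) (by omega)]
  have key1 : ∀ z : V, (f z - f x0)^2 ≤ S * ∑ q ∈ img z, (f q.1 - f q.2)^2 / wt q := by
    intro z
    have htel : ∑ i ∈ range (pz z).length,
        (f ((pz z).getVert (i+1)) - f ((pz z).getVert i)) = f z - f x0 := by
      rw [Finset.sum_range_sub (fun i => f ((pz z).getVert i)) (pz z).length,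
        (pz z).getVert_length, (pz z).getVert_zero]
    have hcs := weighted_cs (pz z).length
      (fun i => f ((pz z).getVert (i+1)) - f ((pz z).getVert i))
      (fun i => (D:ℝ)^(R-1-i)) (fun i => pow_pos hDR _)
    rw [htel] at hcs
    have hwle : ∑ i ∈ range (pz z).length, (D:ℝ)^(R-1-i) ≤ S := by
      rw [hS, ← Finset.sum_range_reflect (fun i => (D:ℝ)^i) R]
      exact Finset.sum_le_sum_of_subset_of_nonneg
        (Finset.range_subset_range.mpr (hlen_le z)) (fun i _ _ => (pow_pos hDR _).le)
    have hterm_nonneg : 0 ≤ ∑ i ∈ range (pz z).length,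
        (f ((pz z).getVert (i+1)) - f ((pz z).getVert i))^2 / (D:ℝ)^(R-1-i) :=
      Finset.sum_nonneg fun i _ => div_nonneg (sq_nonneg _) (pow_pos hDR _).le
    have hinj : ∀ i ∈ range (pz z).length, ∀ j ∈ range (pz z).length,
        ((pz z).getVert i, (pz z).getVert (i+1)) = ((pz z).getVert j, (pz z).getVert (j+1))
          → i = j := by
      intro i hi j hj hij
      rw [Finset.mem_range] at hi hj
      have d1 := hgv1 z i (le_of_lt hi)
      have d2 := hgv1 z j (le_of_lt hj)
      have e1 : (pz z).getVert i = (pz z).getVert j := congrArg Prod.fst hij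
      rw [e1] at d1
      omega
    have himgsum : ∑ q ∈ img z, (f q.1 - f q.2)^2 / wt q
        = ∑ i ∈ range (pz z).length,
            (f ((pz z).getVert (i+1)) - f ((pz z).getVert i))^2 / (D:ℝ)^(R-1-i) := by
      rw [himg]
      rw [Finset.sum_image hinj]
      refine Finset.sum_congr rfl fun i hi => ?_
      rw [Finset.mem_range] at hi
      rw [hwt]
      simp only []
      rw [hgv1 z i (le_of_lt hi)]
      ring
    calc (f z - f x0)^2 ≤ _ := hcs
      _ ≤ S * ∑ i ∈ range (pz z).length,
            (f ((pz z).getVert (i+1)) - f ((pz z).getVert i))^2 / (D:ℝ)^(R-1-i) :=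
          mul_le_mul_of_nonneg_right hwle hterm_nonneg
      _ = S * ∑ q ∈ img z, (f q.1 - f q.2)^2 / wt q := by rw [himgsum]
  have key3 : ∀ q ∈ P, ((bdry G).filter (fun z => q ∈ img z)).card
      ≤ D ^ (R - 1 - G.dist x0 q.1) := by
    intro q hq
    rw [hP, Finset.mem_filter] at hq
    obtain ⟨-, hadj, hdq⟩ := hq
    refine le_trans (Finset.card_le_card ?_)
      (branch_count hT D hD hdeg (R - 1 - G.dist x0 q.1) q.1 q.2 hadj)
    intro z hz
    rw [Finset.mem_filter] at hz
    obtain ⟨hzb, hzq⟩ := hz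
    rw [himg, Finset.mem_image] at hzq
    obtain ⟨i, hi, hqe⟩ := hzq
    rw [Finset.mem_range] at hi
    have d1 := hgv1 z i (le_of_lt hi)
    have d2 := hgv2 z i (le_of_lt hi)
    have d3 := hgv2 z (i+1) hi
    have e1 : (pz z).getVert i = q.1 := congrArg Prod.fst hqe
    have e2 : (pz z).getVert (i+1) = q.2 := congrArg Prod.snd hqe
    have hlz := hlen_le z
    rw [e1] at d1 d2
    rw [e2] at d3
    rw [Finset.mem_filter]
    refine ⟨Finset.mem_univ z, ?_, ?_, ?_⟩
    · rw [bdry, Finset.mem_filter] at hzb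
      exact hzb.2
    · omega
    · omega
  have exch : ∑ z ∈ bdry G, ∑ q ∈ img z, (f q.1 - f q.2)^2 / wt q
      ≤ ∑ q ∈ P, (f q.1 - f q.2)^2 := by
    have step1 : ∀ z : V, ∑ q ∈ img z, (f q.1 - f q.2)^2 / wt q
        = ∑ q ∈ P, (if q ∈ img z then (f q.1 - f q.2)^2 / wt q else 0) := by
      intro z
      rw [Finset.sum_ite_mem, Finset.inter_eq_right.mpr (himgP z)]
    calc ∑ z ∈ bdry G, ∑ q ∈ img z, (f q.1 - f q.2)^2 / wt q
        = ∑ z ∈ bdry G, ∑ q ∈ P, (if q ∈ img z then (f q.1 - f q.2)^2 / wt q else 0) :=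
          Finset.sum_congr rfl fun z _ => step1 z
      _ = ∑ q ∈ P, ∑ z ∈ bdry G, (if q ∈ img z then (f q.1 - f q.2)^2 / wt q else 0) :=
          Finset.sum_comm
      _ ≤ ∑ q ∈ P, (f q.1 - f q.2)^2 := by
          refine Finset.sum_le_sum fun q hq => ?_
          have hcnt := key3 q hq
          have hrw : ∑ z ∈ bdry G, (if q ∈ img z then (f q.1 - f q.2)^2 / wt q else 0)
              = (((bdry G).filter (fun z => q ∈ img z)).card : ℝ)
                  * ((f q.1 - f q.2)^2 / wt q) := by
            rw [← Finset.sum_filter, Finset.sum_const, nsmul_eq_mul]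
          rw [hrw]
          have hwq : wt q = (D:ℝ) ^ (R - 1 - G.dist x0 q.1) := rfl
          have hcard : (((bdry G).filter (fun z => q ∈ img z)).card : ℝ)
              ≤ (D:ℝ) ^ (R - 1 - G.dist x0 q.1) := by
            have := hcnt
            calc (((bdry G).filter (fun z => q ∈ img z)).card : ℝ)
                ≤ ((D ^ (R - 1 - G.dist x0 q.1) : ℕ) : ℝ) := by exact_mod_cast this
              _ = (D:ℝ) ^ (R - 1 - G.dist x0 q.1) := by push_cast; ring
          calc (((bdry G).filter (fun z => q ∈ img z)).card : ℝ)
                * ((f q.1 - f q.2)^2 / wt q)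
              ≤ (D:ℝ) ^ (R - 1 - G.dist x0 q.1) * ((f q.1 - f q.2)^2 / wt q) :=
                mul_le_mul_of_nonneg_right hcard (div_nonneg (sq_nonneg _) (hwtpos q).le)
            _ = (f q.1 - f q.2)^2 := by
                rw [hwq]
                field_simp
  have key4 : ∑ x, ∑ y ∈ G.neighborFinset x, (f x - f y)^2
      = 2 * ∑ q ∈ P, (f q.1 - f q.2)^2 := by
    rw [sum_nbhd]
    have hsplit2 := Finset.sum_filter_add_sum_filter_not
      ((univ ×ˢ univ).filter (fun p : V × V => G.Adj p.1 p.2))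
      (fun q : V × V => G.dist x0 q.2 = G.dist x0 q.1 + 1)
      (fun q : V × V => (f q.1 - f q.2)^2)
    have e1 : ((univ ×ˢ univ).filter (fun p : V × V => G.Adj p.1 p.2)).filter
        (fun q : V × V => G.dist x0 q.2 = G.dist x0 q.1 + 1) = P := by
      rw [hP, Finset.filter_filter]
    have e2 : ∑ q ∈ ((univ ×ˢ univ).filter (fun p : V × V => G.Adj p.1 p.2)).filter
        (fun q : V × V => ¬ G.dist x0 q.2 = G.dist x0 q.1 + 1), (f q.1 - f q.2)^2
        = ∑ q ∈ P, (f q.1 - f q.2)^2 := by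
      refine Finset.sum_nbij' (fun q => Prod.swap q) (fun q => Prod.swap q) ?_ ?_ ?_ ?_ ?_
      · intro q hq
        simp only [Finset.mem_filter, Finset.mem_product, Finset.mem_univ, true_and,
          hP, Prod.fst_swap, Prod.snd_swap] at hq ⊢
        rcases adj_dist_step hT x0 hq.1 with hcase | hcase
        · exact absurd hcase hq.2
        · exact ⟨hq.1.symm, hcase⟩
      · intro q hq
        simp only [Finset.mem_filter, Finset.mem_product, Finset.mem_univ, true_and,
          hP, Prod.fst_swap, Prod.snd_swap] at hq ⊢
        refine ⟨hq.1.symm, ?_⟩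
        have := hq.2
        omega
      · intro q _; exact Prod.swap_swap q
      · intro q _; exact Prod.swap_swap q
      · intro q _
        simp only [Prod.fst_swap, Prod.snd_swap]
        ring
    rw [e1, e2] at hsplit2
    linarith
  have poincare : Q ≤ ∑ z ∈ bdry G, (f z - f x0)^2 := by
    have expand : ∑ z ∈ bdry G, (f z - f x0)^2
        = Q - 2 * f x0 * (∑ z ∈ bdry G, f z) + ((bdry G).card : ℝ) * f x0 ^ 2 := by
      calc ∑ z ∈ bdry G, (f z - f x0)^2
          = ∑ z ∈ bdry G, (f z^2 - 2 * f x0 * f z + f x0^2) :=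
            Finset.sum_congr rfl fun z _ => by ring
        _ = (∑ z ∈ bdry G, (f z^2 - 2 * f x0 * f z)) + ∑ _z ∈ bdry G, f x0^2 :=
            Finset.sum_add_distrib
        _ = ((∑ z ∈ bdry G, f z^2) - ∑ z ∈ bdry G, 2 * f x0 * f z)
              + ((bdry G).card : ℝ) * f x0^2 := by
            rw [Finset.sum_sub_distrib, Finset.sum_const, nsmul_eq_mul]
        _ = Q - 2 * f x0 * (∑ z ∈ bdry G, f z) + ((bdry G).card : ℝ) * f x0 ^ 2 := by
            rw [hQ, Finset.mul_sum]
    rw [expand, hsum0]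
    have hnn : (0:ℝ) ≤ ((bdry G).card : ℝ) * f x0 ^ 2 :=
      mul_nonneg (Nat.cast_nonneg _) (sq_nonneg _)
    linarith
  have chain : Q ≤ S * (lam * Q) := by
    calc Q ≤ ∑ z ∈ bdry G, (f z - f x0)^2 := poincare
      _ ≤ ∑ z ∈ bdry G, S * ∑ q ∈ img z, (f q.1 - f q.2)^2 / wt q :=
          Finset.sum_le_sum fun z _ => key1 z
      _ = S * ∑ z ∈ bdry G, ∑ q ∈ img z, (f q.1 - f q.2)^2 / wt q :=
          (Finset.mul_sum _ _ _).symm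
      _ ≤ S * ∑ q ∈ P, (f q.1 - f q.2)^2 := mul_le_mul_of_nonneg_left exch hSpos.le
      _ = S * (lam * Q) := by
          have hPQ : ∑ q ∈ P, (f q.1 - f q.2)^2 = lam * Q := by
            have h4 := key4
            rw [hE2] at h4
            linarith
          rw [hPQ]
  rw [div_le_iff₀ hSpos]
  have h1 : 1 * Q ≤ (lam * S) * Q := by
    calc 1 * Q = Q := one_mul Q
      _ ≤ S * (lam * Q) := chain
      _ = (lam * S) * Q := by ring
  exact le_of_mul_le_mul_right h1 hQpos


section Existence

variable (G : SimpleGraph V)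

lemma sum_split (g : V → ℝ) :
    ∑ x, g x = ∑ x ∈ bdry G, g x + ∑ x ∈ univ \ bdry G, g x := by
  rw [← Finset.sum_union Finset.disjoint_sdiff,
    Finset.union_sdiff_of_subset (Finset.subset_univ _)]

noncomputable def lapL : (V → ℝ) →ₗ[ℝ] (V → ℝ) where
  toFun f := lap G f
  map_add' f g := by
    funext x
    simp only [lap, Pi.add_apply]
    rw [← Finset.sum_add_distrib]
    exact Finset.sum_congr rfl fun y _ => by ring
  map_smul' c f := by
    funext x
    simp only [lap, Pi.smul_apply, smul_eq_mul, RingHom.id_apply]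
    rw [Finset.mul_sum]
    exact Finset.sum_congr rfl fun y _ => by ring

noncomputable def Phi : (V → ℝ) →ₗ[ℝ]
    ({x : V // x ∈ bdry G} → ℝ) × ({x : V // x ∉ bdry G} → ℝ) :=
  (LinearMap.funLeft ℝ ℝ (Subtype.val : {x : V // x ∈ bdry G} → V)).prod
    ((LinearMap.funLeft ℝ ℝ (Subtype.val : {x : V // x ∉ bdry G} → V)).comp (lapL G))

lemma exists_eigenpair (hT : G.IsTree) (hcard : 2 ≤ Fintype.card V) :
    ∃ (lam : ℝ) (f : V → ℝ), 0 < lam ∧ IsEigenpair G lam f := by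
  have hc := hT.isConnected
  obtain ⟨b1, b2, hb1, hb2, hb12⟩ := two_leaves hT hcard
  -- injectivity of Phi
  have hinj : Function.Injective (Phi G) := by
    rw [injective_iff_map_eq_zero]
    intro f hf
    have hf1 : ∀ b : {x : V // x ∈ bdry G}, f b.val = 0 := by
      intro b
      have := congrFun (congrArg Prod.fst hf) b
      simpa [Phi] using this
    have hf2 : ∀ i : {x : V // x ∉ bdry G}, lap G f i.val = 0 := by
      intro i
      have := congrFun (congrArg Prod.snd hf) i
      simpa [Phi, lapL] using this
    have hzero : ∑ x, f x * lap G f x = 0 := by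
      refine Finset.sum_eq_zero fun x _ => ?_
      by_cases hx : x ∈ bdry G
      · rw [hf1 ⟨x, hx⟩, zero_mul]
      · rw [hf2 ⟨x, hx⟩, mul_zero]
    have hE0 : ∑ x, ∑ y ∈ G.neighborFinset x, (f x - f y)^2 = 0 := by
      rw [← green_self, hzero]; ring
    have hconst := const_of_adj_eq G hc f (adj_eq_of_energy_eq_zero G f hE0)
    funext x
    show f x = 0
    rw [hconst x b1]
    exact hf1 ⟨b1, hb1⟩
  have hfr : Module.finrank ℝ (V → ℝ)
      = Module.finrank ℝ (({x : V // x ∈ bdry G} → ℝ) × ({x : V // x ∉ bdry G} → ℝ)) := by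
    rw [Module.finrank_prod, Module.finrank_fintype_fun_eq_card,
      Module.finrank_fintype_fun_eq_card, Module.finrank_fintype_fun_eq_card]
    rw [← Fintype.card_sum]
    exact (Fintype.card_congr (Equiv.sumCompl (· ∈ bdry G))).symm
  have hsurj : Function.Surjective (Phi G) :=
    (LinearMap.injective_iff_surjective_of_finrank_eq_finrank hfr).mp hinj
  set ePhi := LinearEquiv.ofBijective (Phi G) ⟨hinj, hsurj⟩ with hePhi
  set ext : ({x : V // x ∈ bdry G} → ℝ) →ₗ[ℝ] (V → ℝ) :=
    ePhi.symm.toLinearMap.comp (LinearMap.inl ℝ _ _) with hextdef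
  have hext : ∀ g : {x : V // x ∈ bdry G} → ℝ, Phi G (ext g) = (g, 0) := by
    intro g
    have h1 : ext g = ePhi.symm (g, 0) := rfl
    rw [h1]
    have h2 : Phi G (ePhi.symm (g, 0)) = ePhi (ePhi.symm (g, 0)) := rfl
    rw [h2, LinearEquiv.apply_symm_apply]
  have hextB : ∀ (g : {x : V // x ∈ bdry G} → ℝ) (b : {x : V // x ∈ bdry G}),
      (ext g) b.val = g b := by
    intro g b
    have := congrFun (congrArg Prod.fst (hext g)) b
    simpa [Phi] using this
  have hextI : ∀ (g : {x : V // x ∈ bdry G} → ℝ) (i : {x : V // x ∉ bdry G}),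
      lap G (ext g) i.val = 0 := by
    intro g i
    have := congrFun (congrArg Prod.snd (hext g)) i
    simpa [Phi, lapL] using this
  set T0 : ({x : V // x ∈ bdry G} → ℝ) →ₗ[ℝ] ({x : V // x ∈ bdry G} → ℝ) :=
    (LinearMap.funLeft ℝ ℝ (Subtype.val : {x : V // x ∈ bdry G} → V)).comp
      ((lapL G).comp ext) with hT0def
  have hT0 : ∀ (g : {x : V // x ∈ bdry G} → ℝ) (b : {x : V // x ∈ bdry G}),
      T0 g b = lap G (ext g) b.val := fun g b => rfl
  have hsum_sub : ∀ F : V → ℝ, ∑ x ∈ bdry G, F x = ∑ b : {x : V // x ∈ bdry G}, F b.val :=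
    fun F => Finset.sum_subtype (bdry G) (fun x => Iff.rfl) F
  -- key computation
  have key : ∀ g h : {x : V // x ∈ bdry G} → ℝ,
      ∑ x, (ext h) x * lap G (ext g) x = ∑ b, (T0 g) b * h b := by
    intro g h
    rw [sum_split G (fun x => (ext h) x * lap G (ext g) x)]
    have t2 : ∑ x ∈ univ \ bdry G, (ext h) x * lap G (ext g) x = 0 := by
      refine Finset.sum_eq_zero fun x hx => ?_
      rw [hextI g ⟨x, (Finset.mem_sdiff.mp hx).2⟩, mul_zero]
    have t1 : ∑ x ∈ bdry G, (ext h) x * lap G (ext g) x = ∑ b, (T0 g) b * h b := by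
      rw [hsum_sub (fun x => (ext h) x * lap G (ext g) x)]
      refine Finset.sum_congr rfl fun b _ => ?_
      rw [hextB h b, hT0 g b]
      ring
    rw [t1, t2, add_zero]
  have hsym0 : ∀ f g : V → ℝ, ∑ x, g x * lap G f x = ∑ x, f x * lap G g x := by
    intro f g
    have h1 := green G f g
    have h2 := green G g f
    have h3 : ∑ x, ∑ y ∈ G.neighborFinset x, (g x - g y) * (f x - f y)
        = ∑ x, ∑ y ∈ G.neighborFinset x, (f x - f y) * (g x - g y) :=
      Finset.sum_congr rfl fun x _ => Finset.sum_congr rfl fun y _ => by ring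
    linarith
  have hTsym : ∀ g h : {x : V // x ∈ bdry G} → ℝ,
      ∑ b, (T0 g) b * h b = ∑ b, g b * (T0 h) b := by
    intro g h
    rw [← key g h]
    rw [hsym0 (ext g) (ext h)]
    rw [key h g]
    refine Finset.sum_congr rfl fun b _ => by ring
  -- move to EuclideanSpace
  set E := EuclideanSpace ℝ {x : V // x ∈ bdry G} with hE
  set el : E ≃ₗ[ℝ] ({x : V // x ∈ bdry G} → ℝ) :=
    WithLp.linearEquiv 2 ℝ ({x : V // x ∈ bdry G} → ℝ) with heldef
  set T : E →ₗ[ℝ] E := el.symm.toLinearMap.comp (T0.comp el.toLinearMap) with hTdef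
  have hip : ∀ x y : E, (inner ℝ x y : ℝ) = ∑ b, (el x) b * (el y) b := by
    intro x y
    rw [PiLp.inner_apply]
    refine Finset.sum_congr rfl fun b _ => ?_
    simp [RCLike.inner_apply]
    exact mul_comm _ _
  have hTel : ∀ x : E, el (T x) = T0 (el x) := by
    intro x
    rw [hTdef]
    simp only [LinearMap.comp_apply, LinearEquiv.coe_coe]
    rw [LinearEquiv.apply_symm_apply]
  have hTisSym : (T : E →ₗ[ℝ] E).IsSymmetric := by
    intro x y
    rw [hip, hip, hTel x]
    have := hTsym (el x) (el y)
    rw [this]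
    refine Finset.sum_congr rfl fun b _ => ?_
    rw [hTel y]
  -- positivity witness
  set g0 : {x : V // x ∈ bdry G} → ℝ := fun b => if b = ⟨b1, hb1⟩ then 1 else 0 with hg0
  have hg0ne : g0 ≠ 0 := by
    intro h0
    have := congrFun h0 ⟨b1, hb1⟩
    simp [hg0] at this
  set x0 : E := el.symm g0 with hx0def
  have helx0 : el x0 = g0 := el.apply_symm_apply g0
  have hTPos : 0 < (inner ℝ (T x0) x0 : ℝ) := by
    rw [hip, hTel x0, helx0]
    have h1 : ∑ b, (T0 g0) b * g0 b = ∑ x, (ext g0) x * lap G (ext g0) x := (key g0 g0).symm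
    rw [h1]
    have hgreen := green_self G (ext g0)
    have hEnn := energy_nonneg G (ext g0)
    have hEne : ∑ x, ∑ y ∈ G.neighborFinset x, ((ext g0) x - (ext g0) y)^2 ≠ 0 := by
      intro h
      have hconst := const_of_adj_eq G hc (ext g0) (adj_eq_of_energy_eq_zero G (ext g0) h)
      have e1 : (ext g0) b1 = 1 := by
        have := hextB g0 ⟨b1, hb1⟩
        simpa [hg0] using this
      have e2 : (ext g0) b2 = 0 := by
        have := hextB g0 ⟨b2, hb2⟩
        have hne : (⟨b2, hb2⟩ : {x : V // x ∈ bdry G}) ≠ ⟨b1, hb1⟩ := by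
          intro hh
          exact hb12 (congrArg Subtype.val hh).symm
        simpa [hg0, hne] using this
      have h12 := hconst b1 b2
      rw [e1, e2] at h12
      norm_num at h12
    have hlt := lt_of_le_of_ne hEnn (Ne.symm hEne)
    linarith
  have hx0ne : x0 ≠ 0 := by
    intro h0
    rw [h0] at hTPos
    simp at hTPos
  haveI : Nontrivial E := nontrivial_of_ne x0 0 hx0ne
  -- the Rayleigh sup
  set Tc : E →L[ℝ] E := LinearMap.toContinuousLinearMap T with hTcdef
  have hbdd : BddAbove (Set.range fun x : {x : E // x ≠ 0} =>
      RCLike.re (inner ℝ (T x) (x : E) : ℝ) / ‖(x : E)‖^2) := by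
    refine ⟨‖Tc‖, ?_⟩
    rintro r ⟨x, rfl⟩
    dsimp only
    have hxpos : 0 < ‖(x : E)‖ := norm_pos_iff.mpr x.2
    have h1 : (inner ℝ (T x) (x : E) : ℝ) ≤ ‖T (x : E)‖ * ‖(x : E)‖ := real_inner_le_norm _ _
    have h2 : ‖T (x : E)‖ ≤ ‖Tc‖ * ‖(x : E)‖ := by
      have := Tc.le_opNorm (x : E)
      simpa [hTcdef] using this
    have h3 : RCLike.re (inner ℝ (T x) (x : E) : ℝ) = (inner ℝ (T x) (x : E) : ℝ) := rfl
    rw [h3]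
    rw [div_le_iff₀ (by positivity)]
    calc (inner ℝ (T x) (x : E) : ℝ) ≤ ‖T (x : E)‖ * ‖(x : E)‖ := h1
      _ ≤ (‖Tc‖ * ‖(x : E)‖) * ‖(x : E)‖ := by nlinarith [norm_nonneg (T (x : E))]
      _ = ‖Tc‖ * ‖(x : E)‖^2 := by ring
  set mu : ℝ := ⨆ x : {x : E // x ≠ 0}, RCLike.re (inner ℝ (T x) (x : E) : ℝ) / ‖(x : E)‖^2
    with hmu
  have hmupos : 0 < mu := by
    have hle : (inner ℝ (T x0) x0 : ℝ) / ‖x0‖^2 ≤ mu := by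
      have := le_ciSup hbdd (⟨x0, hx0ne⟩ : {x : E // x ≠ 0})
      exact this
    have hnpos : 0 < ‖x0‖^2 := by
      have : 0 < ‖x0‖ := norm_pos_iff.mpr hx0ne
      positivity
    have : 0 < (inner ℝ (T x0) x0 : ℝ) / ‖x0‖^2 := div_pos hTPos hnpos
    linarith
  have heig : Module.End.HasEigenvalue T mu := by
    have := hTisSym.hasEigenvalue_iSup_of_finiteDimensional
    exact this
  obtain ⟨v, hv⟩ := heig.exists_hasEigenvector
  have hveq : T v = mu • v := hv.apply_eq_smul
  have hvne : v ≠ 0 := hv.2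
  refine ⟨mu, ext (el v), hmupos, ?_, ?_, ?_⟩
  · intro h0
    apply hvne
    have : el v = 0 := by
      funext b
      have := hextB (el v) b
      rw [h0] at this
      simpa using this.symm
    exact (LinearEquiv.map_eq_zero_iff el).mp this
  · intro x hx
    exact hextI (el v) ⟨x, hx⟩
  · intro x hx
    have h1 : lap G (ext (el v)) x = T0 (el v) ⟨x, hx⟩ := rfl
    rw [h1]
    have h2 : T0 (el v) = el (T v) := (hTel v).symm
    rw [h2, hveq]
    have h3 : el (mu • v) = mu • el v := by
      rw [map_smul]
    rw [h3]
    have h4 : (mu • el v) ⟨x, hx⟩ = mu * (el v) ⟨x, hx⟩ := rfl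
    rw [h4]
    congr 1
    exact (hextB (el v) ⟨x, hx⟩).symm

end Existence
end Aux

/-- For integers `R, D ≥ 1` and a finite tree `G` of diameter at most
`2R` with all vertex degrees at most `D+1`:
`λ₂(G) ≥ 1 / (Σ_{i=0}^{R-1} D^i)`, and for `D ≥ 2` this bound equals `(D-1)/(D^R - 1)`. -/
theorem lambda2_lower_bound_even (R D : ℕ) (hR : 1 ≤ R) (hD : 1 ≤ D)
    (G : SimpleGraph V) (hG : G.IsTree) (hcard : 2 ≤ Fintype.card V)
    (hdiam : G.diam ≤ 2 * R) (hdeg : ∀ v : V, G.degree v ≤ D + 1) :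
    (1 : ℝ) / (∑ i ∈ Finset.range R, (D : ℝ) ^ i) ≤ lambda2 G ∧
    (2 ≤ D → (1 : ℝ) / (∑ i ∈ Finset.range R, (D : ℝ) ^ i)
        = ((D : ℝ) - 1) / ((D : ℝ) ^ R - 1)) := by
  constructor
  · rw [lambda2]
    apply le_csInf
    · obtain ⟨lam, f, hpos, hpair⟩ := exists_eigenpair G hG hcard
      exact ⟨lam, hpos, f, hpair⟩
    · rintro b ⟨hbpos, f, hpair⟩
      exact eigen_lower R D hR hD G hG hcard hdiam hdeg hbpos hpair
  · intro hD2
    have hne1 : (D:ℝ) ≠ 1 := by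
      have h2 : (2:ℝ) ≤ (D:ℝ) := by exact_mod_cast hD2
      linarith
    rw [geom_sum_eq hne1 R, one_div_div]
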